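/- Let ρ₀ ∈ L^{3/2}(ℝ²) be nonnegative and radially symmetric, and let U₀(r) = −4∫₀^∞ (s/(r+s)) ρ₀(s) K(2√(rs)/(r+s)) ds be its flat potential. Then there exists C > 0 (depending on ‖ρ₀‖_{L^{3/2}}) such that |U₀(r)| ≤ C·r^{−1/3} for all r > 0. -/

import Mathlib

open MeasureTheory Real Set
open scoped ENNReal

/-- The complete elliptic integral of the first kind. -/
noncomputable def ellK (ξ : ℝ) : ℝ :=
  ∫ φ in (0:ℝ)..(π/2), 1 / Real.sqrt (1 - ξ^2 * Real.sin φ ^ 2)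

noncomputable def Kc : ℝ := ∫ φ in (0:ℝ)..(π/2), (2/π) ^ (-(3:ℝ)/4) * (π/2 - φ) ^ (-(3:ℝ)/4)

lemma Kc_nonneg : 0 ≤ Kc := by
  apply intervalIntegral.integral_nonneg (le_of_lt (by positivity : (0:ℝ) < π/2))
  intro u hu
  exact mul_nonneg (Real.rpow_nonneg (by positivity) _) (Real.rpow_nonneg (by linarith [hu.2]) _)

lemma Kc_bound_integrable :
    IntervalIntegrable (fun φ : ℝ => (2/π) ^ (-(3:ℝ)/4) * (π/2 - φ) ^ (-(3:ℝ)/4))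
      volume 0 (π/2) := by
  have h : IntervalIntegrable (fun u : ℝ => u ^ (-(3:ℝ)/4)) volume 0 (π/2) := by
    have := intervalIntegral.intervalIntegrable_rpow' (a := 0) (b := π/2)
      (r := -(3:ℝ)/4) (by norm_num)
    exact this
  have h2 := (h.comp_sub_left (π/2))
  simpa using (h2.const_mul ((2/π) ^ (-(3:ℝ)/4))).symm

lemma ellK_abs_le {ξ : ℝ} (h0 : 0 ≤ ξ) (h1 : ξ < 1) :
    |ellK ξ| ≤ Kc * (1 - ξ) ^ (-(1:ℝ)/8) := by
  have hξ2 : ξ^2 < 1 := by nlinarith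
  have hε : (0:ℝ) < 1 - ξ^2 := by linarith
  set c : ℝ := (1 - ξ^2) ^ (-(1:ℝ)/8) with hc
  have hcpos : 0 < c := Real.rpow_pos_of_pos hε _
  have hπ : (0:ℝ) < π/2 := by positivity
  have key : ‖ellK ξ‖ ≤
      |∫ φ in (0:ℝ)..(π/2), c * ((2/π) ^ (-(3:ℝ)/4) * (π/2 - φ) ^ (-(3:ℝ)/4))| := by
    apply intervalIntegral.norm_integral_le_abs_of_norm_le
    · have hmem := ae_restrict_mem (μ := volume) (measurableSet_uIoc (a := (0:ℝ)) (b := π/2))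
      have hne : ∀ᵐ t ∂(volume : Measure ℝ), t ≠ π/2 := by
        rw [ae_iff]
        simp only [ne_eq, not_not, setOf_eq_eq_singleton]
        exact measure_singleton _
      filter_upwards [hmem, ae_restrict_of_ae hne] with t ht htne
      rw [uIoc_of_le hπ.le] at ht
      have ht2 : t < π/2 := lt_of_le_of_ne ht.2 htne
      set x : ℝ := 1 - ξ^2 * Real.sin t ^ 2 with hxdef
      have hs2 : Real.sin t ^ 2 ≤ 1 := Real.sin_sq_le_one t
      have hx2 : 1 - ξ^2 ≤ x := by nlinarith [sq_nonneg (Real.sin t)]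
      have hx1 : Real.cos t ^ 2 ≤ x := by
        have := Real.sin_sq_add_cos_sq t
        nlinarith [sq_nonneg (Real.sin t)]
      have hxpos : 0 < x := lt_of_lt_of_le hε hx2
      have hu : (0:ℝ) < π/2 - t := by linarith
      have hcos : (2/π) * (π/2 - t) ≤ Real.cos t := by
        have := Real.mul_le_sin (x := π/2 - t) (by linarith) (by linarith [ht.1])
        simpa [Real.sin_pi_div_two_sub] using this
      have hb : (0:ℝ) < (2/π) * (π/2 - t) := by positivity
      have hcosnn : 0 ≤ Real.cos t := Real.cos_nonneg_of_mem_Icc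
        ⟨by linarith [ht.1], ht.2⟩
      have hL : ((2/π) * (π/2 - t)) ^ ((3:ℝ)/4) * (1 - ξ^2) ^ ((1:ℝ)/8)
          ≤ Real.sqrt x := by
        rw [Real.sqrt_eq_rpow]
        have e1 : x ^ ((1:ℝ)/2) = x ^ ((3:ℝ)/8) * x ^ ((1:ℝ)/8) := by
          rw [← Real.rpow_add hxpos]; norm_num
        rw [e1]
        have t1 : ((2/π) * (π/2 - t)) ^ ((3:ℝ)/4) ≤ x ^ ((3:ℝ)/8) := by
          have : (((2/π) * (π/2 - t))^2) ^ ((3:ℝ)/8) ≤ x ^ ((3:ℝ)/8) := by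
            apply Real.rpow_le_rpow (by positivity) ?_ (by norm_num)
            calc ((2/π) * (π/2 - t))^2 ≤ Real.cos t ^ 2 :=
                  sq_le_sq' (by linarith) hcos
              _ ≤ x := hx1
          calc ((2/π) * (π/2 - t)) ^ ((3:ℝ)/4)
              = (((2/π) * (π/2 - t))^2) ^ ((3:ℝ)/8) := by
                rw [← Real.rpow_natCast ((2/π) * (π/2 - t)) 2, ← Real.rpow_mul hb.le]
                norm_num
            _ ≤ x ^ ((3:ℝ)/8) := this
        have t2 : (1 - ξ^2) ^ ((1:ℝ)/8) ≤ x ^ ((1:ℝ)/8) :=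
          Real.rpow_le_rpow hε.le hx2 (by norm_num)
        exact mul_le_mul t1 t2 (Real.rpow_nonneg hε.le _) (Real.rpow_nonneg hxpos.le _)
      have hLpos : 0 < ((2/π) * (π/2 - t)) ^ ((3:ℝ)/4) * (1 - ξ^2) ^ ((1:ℝ)/8) :=
        mul_pos (Real.rpow_pos_of_pos hb _) (Real.rpow_pos_of_pos hε _)
      have : ‖1 / Real.sqrt x‖ = 1 / Real.sqrt x := by
        rw [Real.norm_eq_abs, abs_of_nonneg (by positivity)]
      rw [this]
      calc 1 / Real.sqrt x
          ≤ 1 / (((2/π) * (π/2 - t)) ^ ((3:ℝ)/4) * (1 - ξ^2) ^ ((1:ℝ)/8)) :=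
            one_div_le_one_div_of_le hLpos hL
        _ = c * ((2/π) ^ (-(3:ℝ)/4) * (π/2 - t) ^ (-(3:ℝ)/4)) := by
            have ea : ((2:ℝ)/π) ^ (-(3:ℝ)/4) = (((2:ℝ)/π) ^ ((3:ℝ)/4))⁻¹ := by
              rw [show (-(3:ℝ)/4) = -((3:ℝ)/4) by norm_num,
                Real.rpow_neg (by positivity)]
            have eb : (π/2 - t) ^ (-(3:ℝ)/4) = ((π/2 - t) ^ ((3:ℝ)/4))⁻¹ := by
              rw [show (-(3:ℝ)/4) = -((3:ℝ)/4) by norm_num, Real.rpow_neg hu.le]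
            have ec : (1 - ξ^2) ^ (-(1:ℝ)/8) = ((1 - ξ^2) ^ ((1:ℝ)/8))⁻¹ := by
              rw [show (-(1:ℝ)/8) = -((1:ℝ)/8) by norm_num, Real.rpow_neg hε.le]
            rw [Real.mul_rpow (by positivity) hu.le, hc, ea, eb, ec]
            ring
    · exact Kc_bound_integrable.const_mul c
  rw [Real.norm_eq_abs] at key
  rw [intervalIntegral.integral_const_mul] at key
  have hdef : (∫ x in (0:ℝ)..(π/2), (2/π) ^ (-(3:ℝ)/4) * (π/2 - x) ^ (-(3:ℝ)/4)) = Kc := rfl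
  rw [hdef] at key
  have hKc := Kc_nonneg
  rw [abs_of_nonneg (mul_nonneg hcpos.le hKc)] at key
  calc |ellK ξ| ≤ c * Kc := key
    _ ≤ (1-ξ) ^ (-(1:ℝ)/8) * Kc := by
        apply mul_le_mul_of_nonneg_right ?_ hKc
        apply Real.rpow_le_rpow_of_nonpos (by linarith) (by nlinarith) (by norm_num)
    _ = Kc * (1-ξ) ^ (-(1:ℝ)/8) := mul_comm _ _

lemma lint_Ioc_le {a b : ℝ} (hab : a ≤ b) {g : ℝ → ℝ}
    (hg : IntervalIntegrable g volume a b) (hgnn : ∀ x ∈ Ioc a b, 0 ≤ g x)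
    {c : ℝ} (hval : (∫ x in a..b, g x) ≤ c) :
    ∫⁻ x in Ioc a b, ENNReal.ofReal (g x) ≤ ENNReal.ofReal c := by
  have hfi : IntegrableOn g (Ioc a b) volume := by
    have := hg.def'
    rwa [uIoc_of_le hab] at this
  have hnn : 0 ≤ᵐ[volume.restrict (Ioc a b)] g :=
    (ae_restrict_mem measurableSet_Ioc).mono hgnn
  rw [← ofReal_integral_eq_lintegral_ofReal hfi hnn]
  apply ENNReal.ofReal_le_ofReal
  rwa [intervalIntegral.integral_of_le hab] at hval

lemma lint_Ioi_le {a : ℝ} {g : ℝ → ℝ}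
    (hg : IntegrableOn g (Ioi a) volume) (hgnn : ∀ x ∈ Ioi a, 0 ≤ g x)
    {c : ℝ} (hval : (∫ x in Ioi a, g x) ≤ c) :
    ∫⁻ x in Ioi a, ENNReal.ofReal (g x) ≤ ENNReal.ofReal c := by
  have hnn : 0 ≤ᵐ[volume.restrict (Ioi a)] g :=
    (ae_restrict_mem measurableSet_Ioi).mono hgnn
  rw [← ofReal_integral_eq_lintegral_ofReal hg hnn]
  exact ENNReal.ofReal_le_ofReal hval

lemma sqrt_rpow_n34 {x : ℝ} (hx : 0 ≤ x) :
    (Real.sqrt x) ^ (-(3:ℝ)/4) = x ^ (-(3:ℝ)/8) := by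
  rw [Real.sqrt_eq_rpow, ← Real.rpow_mul hx]
  norm_num

lemma sqrt_rpow_p34 {x : ℝ} (hx : 0 ≤ x) :
    (Real.sqrt x) ^ ((3:ℝ)/4) = x ^ ((3:ℝ)/8) := by
  rw [Real.sqrt_eq_rpow, ← Real.rpow_mul hx]
  norm_num

lemma div_rpow_n34 {x y : ℝ} (hx : 0 ≤ x) (hy : 0 < y) :
    (x / y) ^ (-(3:ℝ)/4) = x ^ (-(3:ℝ)/4) * y ^ ((3:ℝ)/4) := by
  rw [Real.div_rpow hx hy.le, div_eq_mul_inv, ← Real.rpow_neg hy.le,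
    show (-(-(3:ℝ)/4)) = (3:ℝ)/4 by norm_num]

lemma two_rpow_34_le : (2:ℝ) ^ ((3:ℝ)/4) ≤ 2 := by
  calc (2:ℝ) ^ ((3:ℝ)/4) ≤ (2:ℝ) ^ (1:ℝ) :=
        Real.rpow_le_rpow_of_exponent_le one_le_two (by norm_num)
    _ = 2 := Real.rpow_one 2

lemma three_rpow_34_le : (3:ℝ) ^ ((3:ℝ)/4) ≤ 3 := by
  calc (3:ℝ) ^ ((3:ℝ)/4) ≤ (3:ℝ) ^ (1:ℝ) :=
        Real.rpow_le_rpow_of_exponent_le (by norm_num) (by norm_num)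
    _ = 3 := Real.rpow_one 3

lemma sqrt_quarter (r : ℝ) (hr : 0 ≤ r) : Real.sqrt (r/4) = Real.sqrt r / 2 := by
  rw [show r/4 = r * (1/4) by ring, Real.sqrt_mul hr,
    show (1:ℝ)/4 = (1/2)^2 by norm_num, Real.sqrt_sq (by norm_num)]
  ring

lemma sqrt_four_mul (r : ℝ) : Real.sqrt (4*r) = 2 * Real.sqrt r := by
  rw [show (4:ℝ)*r = 2^2 * r by ring, Real.sqrt_mul (by positivity),
    Real.sqrt_sq (by norm_num)]

lemma Jbound {r : ℝ} (hr : 0 < r) :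
    (∫⁻ s in Ioi (0:ℝ),
      ENNReal.ofReal (s * ((r+s) ^ (-(21:ℝ)/8) * |Real.sqrt s - Real.sqrt r| ^ (-(3:ℝ)/4))))
      ≤ ENNReal.ofReal (193 / r) := by
  have hsr : 0 < Real.sqrt r := Real.sqrt_pos.mpr hr
  set W : ℝ → ℝ := fun s =>
    s * ((r+s) ^ (-(21:ℝ)/8) * |Real.sqrt s - Real.sqrt r| ^ (-(3:ℝ)/4)) with hW
  have hsplit1 : Ioi (0:ℝ) = Ioc 0 (4*r) ∪ Ioi (4*r) :=
    (Ioc_union_Ioi_eq_Ioi (by positivity)).symm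
  have hsplit2 : Ioc (0:ℝ) (4*r) = Ioc 0 (r/4) ∪ Ioc (r/4) (4*r) :=
    (Ioc_union_Ioc_eq_Ioc (by positivity) (by linarith)).symm
  have hsplit3 : Ioc (r/4) (4*r) = Ioc (r/4) r ∪ Ioc r (4*r) :=
    (Ioc_union_Ioc_eq_Ioc (by linarith) (by linarith)).symm
  rw [hsplit1, lintegral_union measurableSet_Ioi Ioc_disjoint_Ioi_same,
    hsplit2, lintegral_union measurableSet_Ioc (Ioc_disjoint_Ioc_of_le le_rfl),
    hsplit3, lintegral_union measurableSet_Ioc (Ioc_disjoint_Ioc_of_le le_rfl)]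
  have hr218 : ∀ s : ℝ, 0 < s → (r+s) ^ (-(21:ℝ)/8) ≤ r ^ (-(21:ℝ)/8) :=
    fun s hs => Real.rpow_le_rpow_of_nonpos hr (by linarith) (by norm_num)
  -- piece 1
  have piece1 : (∫⁻ s in Ioc (0:ℝ) (r/4), ENNReal.ofReal (W s)) ≤
      ENNReal.ofReal (1/(8*r)) := by
    have hb : ∀ s ∈ Ioc (0:ℝ) (r/4), ENNReal.ofReal (W s) ≤
        ENNReal.ofReal ((1/2) * r ^ (-(2:ℝ))) := by
      intro s hs
      apply ENNReal.ofReal_le_ofReal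
      have hs0 : 0 < s := hs.1
      have hsq : Real.sqrt s ≤ Real.sqrt r / 2 := by
        calc Real.sqrt s ≤ Real.sqrt (r/4) := Real.sqrt_le_sqrt hs.2
          _ = Real.sqrt r / 2 := sqrt_quarter r hr.le
      have habs : Real.sqrt r / 2 ≤ |Real.sqrt s - Real.sqrt r| := by
        rw [abs_sub_comm, abs_of_nonneg (by linarith [Real.sqrt_nonneg s])]
        linarith
      have h1 : |Real.sqrt s - Real.sqrt r| ^ (-(3:ℝ)/4) ≤
          (Real.sqrt r / 2) ^ (-(3:ℝ)/4) :=
        Real.rpow_le_rpow_of_nonpos (by positivity) habs (by norm_num)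
      have h1' : (Real.sqrt r / 2) ^ (-(3:ℝ)/4) ≤ 2 * r ^ (-(3:ℝ)/8) := by
        rw [div_rpow_n34 (Real.sqrt_nonneg r) (by norm_num), sqrt_rpow_n34 hr.le,
          mul_comm]
        exact mul_le_mul_of_nonneg_right two_rpow_34_le (Real.rpow_nonneg hr.le _)
      calc W s ≤ (r/4) * (r ^ (-(21:ℝ)/8) * (2 * r ^ (-(3:ℝ)/8))) := by
            apply mul_le_mul hs.2
            · exact mul_le_mul (hr218 s hs.1) (h1.trans h1')
                (Real.rpow_nonneg (abs_nonneg _) _) (Real.rpow_nonneg hr.le _)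
            · exact mul_nonneg (Real.rpow_nonneg (by positivity) _)
                (Real.rpow_nonneg (abs_nonneg _) _)
            · positivity
        _ = (1/2) * (r * (r ^ (-(21:ℝ)/8) * r ^ (-(3:ℝ)/8))) := by ring
        _ = (1/2) * r ^ (-(2:ℝ)) := by
            rw [← Real.rpow_add hr, show r * (r ^ (-(21:ℝ)/8 + -(3:ℝ)/8)) =
              r ^ (1:ℝ) * r ^ (-(3:ℝ)) by rw [Real.rpow_one]; norm_num,
              ← Real.rpow_add hr]
            norm_num
    calc (∫⁻ s in Ioc (0:ℝ) (r/4), ENNReal.ofReal (W s))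
        ≤ ∫⁻ _ in Ioc (0:ℝ) (r/4), ENNReal.ofReal ((1/2) * r ^ (-(2:ℝ))) :=
          setLIntegral_mono' measurableSet_Ioc hb
      _ = ENNReal.ofReal ((1/2) * r ^ (-(2:ℝ))) * ENNReal.ofReal (r/4) := by
          rw [setLIntegral_const, Real.volume_Ioc]
          norm_num
      _ ≤ ENNReal.ofReal (1/(8*r)) := by
          rw [← ENNReal.ofReal_mul (by positivity)]
          apply ENNReal.ofReal_le_ofReal
          have hne : r ≠ 0 := hr.ne'
          have h2 : r ^ (-(2:ℝ)) = (r^2)⁻¹ := by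
            rw [Real.rpow_neg hr.le, Real.rpow_two]
          rw [h2]
          refine le_of_eq ?_
          field_simp
          ring
  have three_rpow_14_le : (3:ℝ)^((1:ℝ)/4) ≤ 2 := by
    have h16 : (16:ℝ)^((1:ℝ)/4) = 2 := by
      rw [show (16:ℝ) = 2^(4:ℕ) by norm_num, ← Real.rpow_natCast 2 4,
        ← Real.rpow_mul (by norm_num)]
      norm_num
    calc (3:ℝ)^((1:ℝ)/4) ≤ (16:ℝ)^((1:ℝ)/4) :=
          Real.rpow_le_rpow (by norm_num) (by norm_num) (by norm_num)
      _ = 2 := h16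
  -- piece 2a
  have piece2a : (∫⁻ s in Ioc (r/4) r, ENNReal.ofReal (W s)) ≤
      ENNReal.ofReal (8/r) := by
    have hb : ∀ s ∈ Ioc (r/4) r, ENNReal.ofReal (W s) ≤
        ENNReal.ofReal ((2 * r ^ (-(5:ℝ)/4)) * (r - s) ^ (-(3:ℝ)/4)) := by
      intro s hs
      apply ENNReal.ofReal_le_ofReal
      have hs0 : 0 < s := lt_trans (by positivity) hs.1
      rcases eq_or_lt_of_le hs.2 with heq | hlt
      · rw [heq]
        simp only [hW, sub_self, abs_zero,
          Real.zero_rpow (by norm_num : (-(3:ℝ)/4) ≠ 0)]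
        simp
      · have hss : Real.sqrt s < Real.sqrt r := Real.sqrt_lt_sqrt hs0.le hlt
        have habs : |Real.sqrt s - Real.sqrt r| = Real.sqrt r - Real.sqrt s := by
          rw [abs_sub_comm, abs_of_pos (by linarith)]
        have hkey : (r - s)/(2 * Real.sqrt r) ≤ Real.sqrt r - Real.sqrt s := by
          rw [div_le_iff₀ (by positivity)]
          have e1 := Real.sq_sqrt hr.le
          have e2 := Real.sq_sqrt hs0.le
          nlinarith [Real.sqrt_nonneg s, Real.sqrt_nonneg r]
        have hposq : 0 < (r - s)/(2 * Real.sqrt r) := by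
          apply div_pos (by linarith) (by positivity)
        have h1 : |Real.sqrt s - Real.sqrt r| ^ (-(3:ℝ)/4) ≤
            ((r - s)/(2 * Real.sqrt r)) ^ (-(3:ℝ)/4) := by
          rw [habs]
          exact Real.rpow_le_rpow_of_nonpos hposq hkey (by norm_num)
        have h1' : ((r - s)/(2 * Real.sqrt r)) ^ (-(3:ℝ)/4)
            ≤ (r - s) ^ (-(3:ℝ)/4) * (2 * r ^ ((3:ℝ)/8)) := by
          rw [div_rpow_n34 (by linarith) (by positivity),
            Real.mul_rpow (by norm_num) (Real.sqrt_nonneg r), sqrt_rpow_p34 hr.le]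
          apply mul_le_mul_of_nonneg_left ?_ (Real.rpow_nonneg (by linarith) _)
          exact mul_le_mul_of_nonneg_right two_rpow_34_le (Real.rpow_nonneg hr.le _)
        calc W s ≤ r * (r ^ (-(21:ℝ)/8) *
              ((r - s) ^ (-(3:ℝ)/4) * (2 * r ^ ((3:ℝ)/8)))) := by
              apply mul_le_mul hs.2 (mul_le_mul (hr218 s hs0) (h1.trans h1')
                (Real.rpow_nonneg (abs_nonneg _) _) (Real.rpow_nonneg hr.le _))
                (mul_nonneg (Real.rpow_nonneg (by positivity) _)
                  (Real.rpow_nonneg (abs_nonneg _) _)) hr.le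
          _ = (2 * (r ^ (1:ℝ) * r ^ (-(21:ℝ)/8) * r ^ ((3:ℝ)/8))) *
              (r - s) ^ (-(3:ℝ)/4) := by rw [Real.rpow_one]; ring
          _ = (2 * r ^ (-(5:ℝ)/4)) * (r - s) ^ (-(3:ℝ)/4) := by
              rw [← Real.rpow_add hr, ← Real.rpow_add hr]
              norm_num
    refine le_trans (setLIntegral_mono' measurableSet_Ioc hb) ?_
    have hint : IntervalIntegrable
        (fun x => (2 * r ^ (-(5:ℝ)/4)) * (r - x) ^ (-(3:ℝ)/4)) volume (r/4) r := by
      have h := intervalIntegral.intervalIntegrable_rpow' (a := 0) (b := 3/4*r)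
        (r := -(3:ℝ)/4) (by norm_num)
      have h2 := h.comp_sub_left r
      rw [show r - 3/4*r = r/4 by ring, show r - 0 = r by ring] at h2
      exact (h2.const_mul _).symm
    have hgnn : ∀ x ∈ Ioc (r/4) r,
        0 ≤ (2 * r ^ (-(5:ℝ)/4)) * (r - x) ^ (-(3:ℝ)/4) := by
      intro x hx
      exact mul_nonneg (by positivity) (Real.rpow_nonneg (by linarith [hx.2]) _)
    apply lint_Ioc_le (by linarith) hint hgnn
    rw [intervalIntegral.integral_const_mul]
    have hD : (∫ x in (r/4)..r, (r - x) ^ (-(3:ℝ)/4)) = ((3/4)*r) ^ ((1:ℝ)/4) * 4 := by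
      have hcomp := intervalIntegral.integral_comp_sub_left (a := r/4) (b := r)
        (fun u : ℝ => u ^ (-(3:ℝ)/4)) r
      rw [hcomp, show r - r = (0:ℝ) by ring, show r - r/4 = 3/4*r by ring,
        integral_rpow (Or.inl (by norm_num)),
        Real.zero_rpow (by norm_num : (-(3:ℝ)/4 + 1) ≠ 0),
        show (-(3:ℝ)/4 + 1) = (1:ℝ)/4 by norm_num]
      rw [sub_zero, div_eq_mul_inv, show ((1:ℝ)/4)⁻¹ = 4 by norm_num]
    rw [hD]
    have h34 : ((3/4)*r) ^ ((1:ℝ)/4) ≤ r ^ ((1:ℝ)/4) :=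
      Real.rpow_le_rpow (by positivity) (by linarith) (by norm_num)
    calc 2 * r ^ (-(5:ℝ)/4) * (((3/4)*r) ^ ((1:ℝ)/4) * 4)
        ≤ 2 * r ^ (-(5:ℝ)/4) * (r ^ ((1:ℝ)/4) * 4) := by
          apply mul_le_mul_of_nonneg_left
            (mul_le_mul_of_nonneg_right h34 (by norm_num)) (by positivity)
      _ = 8 * (r ^ (-(5:ℝ)/4) * r ^ ((1:ℝ)/4)) := by ring
      _ = 8 * r ^ (-(1:ℝ)) := by rw [← Real.rpow_add hr]; norm_num
      _ = 8 / r := by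
          rw [show (-(1:ℝ)) = -(1:ℝ) by norm_num, Real.rpow_neg_one]
          ring
  -- piece 2b
  have piece2b : (∫⁻ s in Ioc r (4*r), ENNReal.ofReal (W s)) ≤
      ENNReal.ofReal (96/r) := by
    have hb : ∀ s ∈ Ioc r (4*r), ENNReal.ofReal (W s) ≤
        ENNReal.ofReal ((12 * r ^ (-(5:ℝ)/4)) * (s - r) ^ (-(3:ℝ)/4)) := by
      intro s hs
      apply ENNReal.ofReal_le_ofReal
      have hs0 : 0 < s := lt_trans hr hs.1
      have hlt : r < s := hs.1
      have hss : Real.sqrt r < Real.sqrt s := Real.sqrt_lt_sqrt hr.le hlt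
      have hs4 : Real.sqrt s ≤ 2 * Real.sqrt r := by
        calc Real.sqrt s ≤ Real.sqrt (4*r) := Real.sqrt_le_sqrt hs.2
          _ = 2 * Real.sqrt r := sqrt_four_mul r
      have habs : |Real.sqrt s - Real.sqrt r| = Real.sqrt s - Real.sqrt r := by
        rw [abs_of_pos (by linarith)]
      have hkey : (s - r)/(3 * Real.sqrt r) ≤ Real.sqrt s - Real.sqrt r := by
        rw [div_le_iff₀ (by positivity)]
        have e1 := Real.sq_sqrt hr.le
        have e2 := Real.sq_sqrt hs0.le
        nlinarith [Real.sqrt_nonneg s, Real.sqrt_nonneg r]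
      have hposq : 0 < (s - r)/(3 * Real.sqrt r) := by
        apply div_pos (by linarith) (by positivity)
      have h1 : |Real.sqrt s - Real.sqrt r| ^ (-(3:ℝ)/4) ≤
          ((s - r)/(3 * Real.sqrt r)) ^ (-(3:ℝ)/4) := by
        rw [habs]
        exact Real.rpow_le_rpow_of_nonpos hposq hkey (by norm_num)
      have h1' : ((s - r)/(3 * Real.sqrt r)) ^ (-(3:ℝ)/4)
          ≤ (s - r) ^ (-(3:ℝ)/4) * (3 * r ^ ((3:ℝ)/8)) := by
        rw [div_rpow_n34 (by linarith) (by positivity),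
          Real.mul_rpow (by norm_num) (Real.sqrt_nonneg r), sqrt_rpow_p34 hr.le]
        apply mul_le_mul_of_nonneg_left ?_ (Real.rpow_nonneg (by linarith) _)
        exact mul_le_mul_of_nonneg_right three_rpow_34_le (Real.rpow_nonneg hr.le _)
      calc W s ≤ (4*r) * (r ^ (-(21:ℝ)/8) *
            ((s - r) ^ (-(3:ℝ)/4) * (3 * r ^ ((3:ℝ)/8)))) := by
            apply mul_le_mul hs.2 (mul_le_mul (hr218 s hs0) (h1.trans h1')
              (Real.rpow_nonneg (abs_nonneg _) _) (Real.rpow_nonneg hr.le _))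
              (mul_nonneg (Real.rpow_nonneg (by positivity) _)
                (Real.rpow_nonneg (abs_nonneg _) _)) (by positivity)
        _ = (12 * (r ^ (1:ℝ) * r ^ (-(21:ℝ)/8) * r ^ ((3:ℝ)/8))) *
            (s - r) ^ (-(3:ℝ)/4) := by rw [Real.rpow_one]; ring
        _ = (12 * r ^ (-(5:ℝ)/4)) * (s - r) ^ (-(3:ℝ)/4) := by
            rw [← Real.rpow_add hr, ← Real.rpow_add hr]
            norm_num
    refine le_trans (setLIntegral_mono' measurableSet_Ioc hb) ?_
    have hint : IntervalIntegrable
        (fun x => (12 * r ^ (-(5:ℝ)/4)) * (x - r) ^ (-(3:ℝ)/4)) volume r (4*r) := by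
      have h := intervalIntegral.intervalIntegrable_rpow' (a := 0) (b := 3*r)
        (r := -(3:ℝ)/4) (by norm_num)
      have h2 := h.comp_sub_right r
      rw [show (0:ℝ) + r = r by ring, show 3*r + r = 4*r by ring] at h2
      exact h2.const_mul _
    have hgnn : ∀ x ∈ Ioc r (4*r),
        0 ≤ (12 * r ^ (-(5:ℝ)/4)) * (x - r) ^ (-(3:ℝ)/4) := by
      intro x hx
      exact mul_nonneg (by positivity) (Real.rpow_nonneg (by linarith [hx.1.le]) _)
    apply lint_Ioc_le (by linarith) hint hgnn
    rw [intervalIntegral.integral_const_mul]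
    have hD : (∫ x in r..(4*r), (x - r) ^ (-(3:ℝ)/4)) = (3*r) ^ ((1:ℝ)/4) * 4 := by
      have hcomp := intervalIntegral.integral_comp_sub_right (a := r) (b := 4*r)
        (fun u : ℝ => u ^ (-(3:ℝ)/4)) r
      rw [hcomp, show r - r = (0:ℝ) by ring, show 4*r - r = 3*r by ring,
        integral_rpow (Or.inl (by norm_num)),
        Real.zero_rpow (by norm_num : (-(3:ℝ)/4 + 1) ≠ 0),
        show (-(3:ℝ)/4 + 1) = (1:ℝ)/4 by norm_num]
      rw [sub_zero, div_eq_mul_inv, show ((1:ℝ)/4)⁻¹ = 4 by norm_num]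
    rw [hD]
    have h34 : (3*r) ^ ((1:ℝ)/4) ≤ 2 * r ^ ((1:ℝ)/4) := by
      rw [Real.mul_rpow (by norm_num) hr.le]
      exact mul_le_mul_of_nonneg_right three_rpow_14_le (Real.rpow_nonneg hr.le _)
    calc 12 * r ^ (-(5:ℝ)/4) * ((3*r) ^ ((1:ℝ)/4) * 4)
        ≤ 12 * r ^ (-(5:ℝ)/4) * ((2 * r ^ ((1:ℝ)/4)) * 4) := by
          apply mul_le_mul_of_nonneg_left
            (mul_le_mul_of_nonneg_right h34 (by norm_num)) (by positivity)
      _ = 96 * (r ^ (-(5:ℝ)/4) * r ^ ((1:ℝ)/4)) := by ring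
      _ = 96 * r ^ (-(1:ℝ)) := by rw [← Real.rpow_add hr]; norm_num
      _ = 96 / r := by rw [Real.rpow_neg_one]; ring
  -- piece 3
  have piece3 : (∫⁻ s in Ioi (4*r), ENNReal.ofReal (W s)) ≤
      ENNReal.ofReal (1/(2*r)) := by
    have hb : ∀ s ∈ Ioi (4*r), ENNReal.ofReal (W s) ≤
        ENNReal.ofReal (2 * s ^ (-(2:ℝ))) := by
      intro s hs
      apply ENNReal.ofReal_le_ofReal
      have hs4 : 4*r < s := hs
      have hs0 : 0 < s := by linarith
      have hsq : 2 * Real.sqrt r ≤ Real.sqrt s := by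
        calc 2 * Real.sqrt r = Real.sqrt (4*r) := (sqrt_four_mul r).symm
          _ ≤ Real.sqrt s := Real.sqrt_le_sqrt (by linarith)
      have hss0 : 0 < Real.sqrt s := Real.sqrt_pos.mpr hs0
      have habs : |Real.sqrt s - Real.sqrt r| = Real.sqrt s - Real.sqrt r := by
        rw [abs_of_nonneg (by linarith)]
      have hkey : Real.sqrt s / 2 ≤ Real.sqrt s - Real.sqrt r := by linarith
      have h1 : |Real.sqrt s - Real.sqrt r| ^ (-(3:ℝ)/4) ≤
          (Real.sqrt s / 2) ^ (-(3:ℝ)/4) := by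
        rw [habs]
        exact Real.rpow_le_rpow_of_nonpos (by positivity) hkey (by norm_num)
      have h1' : (Real.sqrt s / 2) ^ (-(3:ℝ)/4) ≤ s ^ (-(3:ℝ)/8) * 2 := by
        rw [div_rpow_n34 (Real.sqrt_nonneg s) (by norm_num), sqrt_rpow_n34 hs0.le]
        exact mul_le_mul_of_nonneg_left two_rpow_34_le (Real.rpow_nonneg hs0.le _)
      have h2 : (r+s) ^ (-(21:ℝ)/8) ≤ s ^ (-(21:ℝ)/8) :=
        Real.rpow_le_rpow_of_nonpos hs0 (by linarith) (by norm_num)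
      calc W s ≤ s * (s ^ (-(21:ℝ)/8) * (s ^ (-(3:ℝ)/8) * 2)) := by
            apply mul_le_mul_of_nonneg_left
              (mul_le_mul h2 (h1.trans h1') (Real.rpow_nonneg (abs_nonneg _) _)
                (Real.rpow_nonneg hs0.le _)) hs0.le
        _ = 2 * (s ^ (1:ℝ) * s ^ (-(21:ℝ)/8) * s ^ (-(3:ℝ)/8)) := by
            rw [Real.rpow_one]; ring
        _ = 2 * s ^ (-(2:ℝ)) := by
            rw [← Real.rpow_add hs0, ← Real.rpow_add hs0]
            norm_num
    refine le_trans (setLIntegral_mono' measurableSet_Ioi hb) ?_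
    have hint : IntegrableOn (fun s : ℝ => 2 * s ^ (-(2:ℝ))) (Ioi (4*r)) volume :=
      (integrableOn_Ioi_rpow_of_lt (by norm_num) (by positivity)).const_mul 2
    have hgnn : ∀ x ∈ Ioi (4*r), 0 ≤ 2 * x ^ (-(2:ℝ)) := by
      intro x hx
      have : (0:ℝ) < x := by have := mem_Ioi.mp hx; linarith
      positivity
    apply lint_Ioi_le hint hgnn
    rw [MeasureTheory.integral_const_mul,
      integral_Ioi_rpow_of_lt (by norm_num) (by positivity),
      show (-(2:ℝ) + 1) = -(1:ℝ) by norm_num, Real.rpow_neg_one]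
    rw [div_neg, neg_div, neg_neg, div_one]
    rw [le_div_iff₀ (by positivity)]
    field_simp
    norm_num
  -- combine
  refine le_trans (add_le_add (add_le_add piece1 (add_le_add piece2a piece2b)) piece3) ?_
  rw [← ENNReal.ofReal_add (by positivity) (by positivity),
      ← ENNReal.ofReal_add (by positivity) (by positivity),
      ← ENNReal.ofReal_add (by positivity) (by positivity)]
  apply ENNReal.ofReal_le_ofReal
  have e : 1/(8*r) + (8/r + 96/r) + 1/(2*r) = (1/8 + 8 + 96 + 1/2)/r := by ring
  rw [e]
  exact (div_le_div_iff_of_pos_right hr).mpr (by norm_num)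

lemma div_rpow_n18 {x y : ℝ} (hx : 0 ≤ x) (hy : 0 < y) :
    (x / y) ^ (-(1:ℝ)/8) = x ^ (-(1:ℝ)/8) * y ^ ((1:ℝ)/8) := by
  rw [Real.div_rpow hx hy.le, div_eq_mul_inv, ← Real.rpow_neg hy.le,
    show (-(-(1:ℝ)/8)) = (1:ℝ)/8 by norm_num]

lemma sq_rpow_n18 (x : ℝ) : (x^2) ^ (-(1:ℝ)/8) = |x| ^ (-(1:ℝ)/4) := by
  rw [← sq_abs, ← Real.rpow_natCast |x| 2, ← Real.rpow_mul (abs_nonneg x)]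
  norm_num

lemma cube_id {r s : ℝ} (hr : 0 < r) (hs : 0 < s) :
    (Kc * (s ^ ((1:ℝ)/3) * ((r+s)⁻¹ *
      (1 - 2*Real.sqrt (r*s)/(r+s)) ^ (-(1:ℝ)/8)))) ^ (3:ℝ)
    = Kc^3 * (s * ((r+s) ^ (-(21:ℝ)/8) *
        |Real.sqrt s - Real.sqrt r| ^ (-(3:ℝ)/4))) := by
  have hKc := Kc_nonneg
  have hrs : 0 < r + s := by linarith
  have hxi : 1 - 2*Real.sqrt (r*s)/(r+s) = (Real.sqrt s - Real.sqrt r)^2 / (r+s) := by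
    have e1 := Real.sq_sqrt hr.le
    have e2 := Real.sq_sqrt hs.le
    rw [Real.sqrt_mul hr.le]
    field_simp
    linear_combination -e1 - e2
  rw [hxi, div_rpow_n18 (sq_nonneg _) hrs, sq_rpow_n18]
  set A := |Real.sqrt s - Real.sqrt r| with hA
  have habs : (0:ℝ) ≤ A := abs_nonneg _
  have n1 : (0:ℝ) ≤ s ^ ((1:ℝ)/3) := Real.rpow_nonneg hs.le _
  have n2 : (0:ℝ) ≤ (r+s)⁻¹ := by positivity
  have n3 : (0:ℝ) ≤ A ^ (-(1:ℝ)/4) := Real.rpow_nonneg habs _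
  have n4 : (0:ℝ) ≤ (r+s) ^ ((1:ℝ)/8) := Real.rpow_nonneg hrs.le _
  rw [Real.mul_rpow hKc (mul_nonneg n1 (mul_nonneg n2 (mul_nonneg n3 n4))),
      Real.mul_rpow n1 (mul_nonneg n2 (mul_nonneg n3 n4)),
      Real.mul_rpow n2 (mul_nonneg n3 n4),
      Real.mul_rpow n3 n4]
  have e1 : Kc ^ (3:ℝ) = Kc ^ (3:ℕ) := by
    rw [← Real.rpow_natCast Kc 3]; norm_num
  have e2 : (s ^ ((1:ℝ)/3)) ^ (3:ℝ) = s := by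
    rw [← Real.rpow_mul hs.le, show (1:ℝ)/3*3 = (1:ℝ) by norm_num, Real.rpow_one]
  have e3 : ((r+s)⁻¹) ^ (3:ℝ) = (r+s) ^ (-(3:ℝ)) := by
    rw [← Real.rpow_neg_one (r+s), ← Real.rpow_mul hrs.le]
    norm_num
  have e4 : (A ^ (-(1:ℝ)/4)) ^ (3:ℝ) = A ^ (-(3:ℝ)/4) := by
    rw [← Real.rpow_mul habs]
    norm_num
  have e5 : ((r+s) ^ ((1:ℝ)/8)) ^ (3:ℝ) = (r+s) ^ ((3:ℝ)/8) := by
    rw [← Real.rpow_mul hrs.le]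
    norm_num
  rw [e1, e2, e3, e4, e5]
  have e6 : (r+s) ^ (-(3:ℝ)) * (r+s) ^ ((3:ℝ)/8) = (r+s) ^ (-(21:ℝ)/8) := by
    rw [← Real.rpow_add hrs]
    norm_num
  calc Kc ^ (3:ℕ) * (s * ((r+s) ^ (-(3:ℝ)) * (A ^ (-(3:ℝ)/4) * (r+s) ^ ((3:ℝ)/8))))
      = Kc ^ (3:ℕ) * (s * (((r+s) ^ (-(3:ℝ)) * (r+s) ^ ((3:ℝ)/8)) * A ^ (-(3:ℝ)/4))) := by
        ring
    _ = Kc^3 * (s * ((r+s) ^ (-(21:ℝ)/8) * A ^ (-(3:ℝ)/4))) := by rw [e6]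

theorem radial_potential_decay (ρ₀ : ℝ → ℝ)
    (hmeas : Measurable ρ₀) (hpos : ∀ s, 0 ≤ ρ₀ s)
    (hL32 : IntegrableOn (fun s => s * ρ₀ s ^ ((3:ℝ)/2)) (Ioi 0)) :
    ∃ C : ℝ, 0 < C ∧ ∀ r : ℝ, 0 < r →
      |(-4 * ∫ s in Ioi (0:ℝ),
          (s/(r+s)) * ρ₀ s * ellK (2 * Real.sqrt (r*s) / (r+s)) : ℝ)| ≤
        C * r ^ (-(1:ℝ)/3) := by
  have hKc := Kc_nonneg
  set Ival := ∫ s in Ioi (0:ℝ), s * ρ₀ s ^ ((3:ℝ)/2) with hIval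
  have hInn : 0 ≤ Ival := setIntegral_nonneg measurableSet_Ioi
    (fun s hs => mul_nonneg (le_of_lt hs) (Real.rpow_nonneg (hpos s) _))
  set Cbig := 4 * (Ival ^ ((2:ℝ)/3) * (Kc^3 * 193) ^ ((1:ℝ)/3)) with hCbig
  have hCb_nn : 0 ≤ Cbig := by positivity
  refine ⟨max 1 Cbig, lt_of_lt_of_le one_pos (le_max_left _ _), ?_⟩
  intro r hr
  set F : ℝ → ℝ := fun s => (s/(r+s)) * ρ₀ s * ellK (2 * Real.sqrt (r*s) / (r+s)) with hF
  have habs4 : |(-4 * ∫ s in Ioi (0:ℝ), F s)| = 4 * |∫ s in Ioi (0:ℝ), F s| := by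
    rw [abs_mul]
    norm_num
  rw [habs4]
  have step1 : |∫ s in Ioi (0:ℝ), F s| ≤
      (∫⁻ s in Ioi (0:ℝ), ENNReal.ofReal ‖F s‖).toReal := by
    simpa [Real.norm_eq_abs] using
      norm_integral_le_lintegral_norm (μ := volume.restrict (Ioi 0)) F
  set f1 : ℝ → ℝ≥0∞ := fun s => ENNReal.ofReal (s ^ ((2:ℝ)/3) * ρ₀ s) with hf1
  set f2 : ℝ → ℝ≥0∞ := fun s => ENNReal.ofReal (Kc * (s ^ ((1:ℝ)/3) *
    ((r+s)⁻¹ * (1 - 2*Real.sqrt (r*s)/(r+s)) ^ (-(1:ℝ)/8)))) with hf2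
  have hm1 : AEMeasurable f1 (volume.restrict (Ioi (0:ℝ))) := by
    apply Measurable.aemeasurable
    fun_prop
  have hm2 : AEMeasurable f2 (volume.restrict (Ioi (0:ℝ))) := by
    apply Measurable.aemeasurable
    fun_prop
  -- pointwise bound
  have hne : ∀ᵐ s ∂(volume.restrict (Ioi (0:ℝ))), s ≠ r := by
    apply ae_restrict_of_ae
    rw [ae_iff]
    simp only [ne_eq, not_not, setOf_eq_eq_singleton]
    exact measure_singleton _
  have hptwise : ∀ᵐ s ∂(volume.restrict (Ioi (0:ℝ))),
      ENNReal.ofReal ‖F s‖ ≤ (f1 * f2) s := by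
    filter_upwards [ae_restrict_mem measurableSet_Ioi, hne] with s hs hsne
    have hs0 : 0 < s := hs
    have hrs : 0 < r + s := by linarith
    set ξ := 2*Real.sqrt (r*s)/(r+s) with hξ
    have hξnn : 0 ≤ ξ := by positivity
    have hξlt : ξ < 1 := by
      rw [hξ, div_lt_one hrs, Real.sqrt_mul hr.le]
      have e1 := Real.sq_sqrt hr.le
      have e2 := Real.sq_sqrt hs0.le
      have hne' : Real.sqrt s - Real.sqrt r ≠ 0 := by
        intro h
        apply hsne
        have h2 : Real.sqrt s = Real.sqrt r := by linarith
        rw [← e2, h2, e1]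
      have hsq := mul_self_pos.mpr hne'
      nlinarith
    have hellK := ellK_abs_le hξnn hξlt
    have habsF : ‖F s‖ ≤ (s/(r+s)) * ρ₀ s * (Kc * (1 - ξ) ^ (-(1:ℝ)/8)) := by
      rw [hF, Real.norm_eq_abs, abs_mul, abs_mul,
        abs_of_nonneg (div_nonneg hs0.le hrs.le),
        abs_of_nonneg (hpos s)]
      exact mul_le_mul_of_nonneg_left hellK
        (mul_nonneg (div_nonneg hs0.le hrs.le) (hpos s))
    have hid : (s/(r+s)) * ρ₀ s * (Kc * (1 - ξ) ^ (-(1:ℝ)/8)) =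
        (s ^ ((2:ℝ)/3) * ρ₀ s) * (Kc * (s ^ ((1:ℝ)/3) *
          ((r+s)⁻¹ * (1 - ξ) ^ (-(1:ℝ)/8)))) := by
      have hsplit : s ^ ((2:ℝ)/3) * s ^ ((1:ℝ)/3) = s := by
        rw [← Real.rpow_add hs0, show (2:ℝ)/3 + (1:ℝ)/3 = 1 by norm_num,
          Real.rpow_one]
      calc (s/(r+s)) * ρ₀ s * (Kc * (1 - ξ) ^ (-(1:ℝ)/8))
          = s * (ρ₀ s * Kc * (1 - ξ) ^ (-(1:ℝ)/8) * (r+s)⁻¹) := by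
            field_simp
        _ = (s ^ ((2:ℝ)/3) * s ^ ((1:ℝ)/3)) *
            (ρ₀ s * Kc * (1 - ξ) ^ (-(1:ℝ)/8) * (r+s)⁻¹) := by rw [hsplit]
        _ = (s ^ ((2:ℝ)/3) * ρ₀ s) * (Kc * (s ^ ((1:ℝ)/3) *
            ((r+s)⁻¹ * (1 - ξ) ^ (-(1:ℝ)/8)))) := by ring
    calc ENNReal.ofReal ‖F s‖ ≤
        ENNReal.ofReal ((s ^ ((2:ℝ)/3) * ρ₀ s) * (Kc * (s ^ ((1:ℝ)/3) *
          ((r+s)⁻¹ * (1 - ξ) ^ (-(1:ℝ)/8))))) := by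
          apply ENNReal.ofReal_le_ofReal
          rw [← hid]
          exact habsF
      _ = (f1 * f2) s := by
          rw [Pi.mul_apply, hf1, hf2,
            ENNReal.ofReal_mul (mul_nonneg (Real.rpow_nonneg hs0.le _) (hpos s))]
  -- Hölder
  have holder := ENNReal.lintegral_mul_le_Lp_mul_Lq (volume.restrict (Ioi (0:ℝ)))
    (⟨by norm_num, by norm_num, by norm_num⟩ : Real.HolderConjugate (3/2) 3) hm1 hm2
  have step2 : (∫⁻ s in Ioi (0:ℝ), ENNReal.ofReal ‖F s‖) ≤
      (∫⁻ s in Ioi (0:ℝ), f1 s ^ ((3:ℝ)/2)) ^ (1/((3:ℝ)/2)) *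
      (∫⁻ s in Ioi (0:ℝ), f2 s ^ ((3:ℝ))) ^ (1/(3:ℝ)) :=
    le_trans (lintegral_mono_ae hptwise) holder
  -- T1
  have hT1 : (∫⁻ s in Ioi (0:ℝ), f1 s ^ ((3:ℝ)/2)) = ENNReal.ofReal Ival := by
    have hcong : ∀ᵐ s ∂(volume.restrict (Ioi (0:ℝ))),
        f1 s ^ ((3:ℝ)/2) = ENNReal.ofReal (s * ρ₀ s ^ ((3:ℝ)/2)) := by
      filter_upwards [ae_restrict_mem measurableSet_Ioi] with s hs
      have hs0 : 0 < s := hs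
      rw [hf1, ENNReal.ofReal_rpow_of_nonneg
        (mul_nonneg (Real.rpow_nonneg hs0.le _) (hpos s)) (by norm_num),
        Real.mul_rpow (Real.rpow_nonneg hs0.le _) (hpos s),
        ← Real.rpow_mul hs0.le, show (2:ℝ)/3 * ((3:ℝ)/2) = 1 by norm_num,
        Real.rpow_one]
    rw [lintegral_congr_ae hcong]
    rw [← ofReal_integral_eq_lintegral_ofReal hL32
      ((ae_restrict_mem measurableSet_Ioi).mono
        (fun s hs => mul_nonneg (le_of_lt hs) (Real.rpow_nonneg (hpos s) _)))]
  -- T2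
  have hT2 : (∫⁻ s in Ioi (0:ℝ), f2 s ^ ((3:ℝ))) ≤
      ENNReal.ofReal (Kc^3 * (193/r)) := by
    have hcong : ∀ᵐ s ∂(volume.restrict (Ioi (0:ℝ))),
        f2 s ^ ((3:ℝ)) = ENNReal.ofReal (Kc^3) * ENNReal.ofReal
          (s * ((r+s) ^ (-(21:ℝ)/8) * |Real.sqrt s - Real.sqrt r| ^ (-(3:ℝ)/4))) := by
      filter_upwards [ae_restrict_mem measurableSet_Ioi] with s hs
      have hs0 : 0 < s := hs
      have hrs : 0 < r + s := by linarith
      have hinn : 0 ≤ Kc * (s ^ ((1:ℝ)/3) *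
          ((r+s)⁻¹ * (1 - 2*Real.sqrt (r*s)/(r+s)) ^ (-(1:ℝ)/8))) := by
        apply mul_nonneg hKc
        apply mul_nonneg (Real.rpow_nonneg hs0.le _)
        apply mul_nonneg (by positivity)
        apply Real.rpow_nonneg
        rw [sub_nonneg, div_le_one hrs, Real.sqrt_mul hr.le]
        nlinarith [Real.sq_sqrt hr.le, Real.sq_sqrt hs0.le,
          sq_nonneg (Real.sqrt r - Real.sqrt s)]
      rw [hf2, ENNReal.ofReal_rpow_of_nonneg hinn (by norm_num),
        cube_id hr hs0, ENNReal.ofReal_mul (by positivity)]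
    rw [lintegral_congr_ae hcong, lintegral_const_mul' _ _ ENNReal.ofReal_ne_top]
    calc ENNReal.ofReal (Kc^3) * _ ≤
        ENNReal.ofReal (Kc^3) * ENNReal.ofReal (193/r) :=
          mul_le_mul_right (Jbound hr) _
      _ = ENNReal.ofReal (Kc^3 * (193/r)) :=
          (ENNReal.ofReal_mul (by positivity)).symm
  -- combine
  have step3 : (∫⁻ s in Ioi (0:ℝ), ENNReal.ofReal ‖F s‖) ≤
      ENNReal.ofReal (Ival ^ ((2:ℝ)/3) * (Kc^3 * (193/r)) ^ ((1:ℝ)/3)) := by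
    refine step2.trans ?_
    rw [hT1]
    calc (ENNReal.ofReal Ival) ^ (1/((3:ℝ)/2)) *
        (∫⁻ s in Ioi (0:ℝ), f2 s ^ ((3:ℝ))) ^ (1/(3:ℝ))
        ≤ (ENNReal.ofReal Ival) ^ (1/((3:ℝ)/2)) *
          (ENNReal.ofReal (Kc^3 * (193/r))) ^ (1/(3:ℝ)) := by
          apply mul_le_mul_right
          exact ENNReal.rpow_le_rpow hT2 (by norm_num)
      _ = ENNReal.ofReal (Ival ^ ((2:ℝ)/3) * (Kc^3 * (193/r)) ^ ((1:ℝ)/3)) := by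
          rw [show 1/((3:ℝ)/2) = (2:ℝ)/3 by norm_num,
            show 1/(3:ℝ) = (1:ℝ)/3 by norm_num,
            ENNReal.ofReal_rpow_of_nonneg hInn (by norm_num),
            ENNReal.ofReal_rpow_of_nonneg (by positivity) (by norm_num),
            ENNReal.ofReal_mul (Real.rpow_nonneg hInn _)]
  have step4 : |∫ s in Ioi (0:ℝ), F s| ≤
      Ival ^ ((2:ℝ)/3) * (Kc^3 * (193/r)) ^ ((1:ℝ)/3) := by
    refine step1.trans ?_
    have := ENNReal.toReal_mono ENNReal.ofReal_ne_top step3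
    rwa [ENNReal.toReal_ofReal (by positivity)] at this
  -- final algebra
  have hsplit : (Kc^3 * (193/r)) ^ ((1:ℝ)/3) =
      (Kc^3 * 193) ^ ((1:ℝ)/3) * r ^ (-(1:ℝ)/3) := by
    rw [show Kc^3 * (193/r) = (Kc^3 * 193)/r by ring,
      Real.div_rpow (by positivity) hr.le, div_eq_mul_inv,
      ← Real.rpow_neg hr.le, show (-((1:ℝ)/3)) = -(1:ℝ)/3 by norm_num]
  calc 4 * |∫ s in Ioi (0:ℝ), F s| ≤
      4 * (Ival ^ ((2:ℝ)/3) * ((Kc^3 * 193) ^ ((1:ℝ)/3) * r ^ (-(1:ℝ)/3))) := by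
        rw [← hsplit]
        exact mul_le_mul_of_nonneg_left step4 (by norm_num)
    _ = Cbig * r ^ (-(1:ℝ)/3) := by rw [hCbig]; ring
    _ ≤ max 1 Cbig * r ^ (-(1:ℝ)/3) :=
        mul_le_mul_of_nonneg_right (le_max_right _ _) (Real.rpow_nonneg hr.le _)
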